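/- Let ⊢ have a sound and complete intersective mixed semantics over truth values V and worlds W, with family (D_p^λ, D_c^λ)_{λ∈Λ}. Define the Scott-Suszko reduction: V* = {1, #_p, #_c, 0} (four distinct values), W* = Λ × W, and ⟦F⟧*(λ, w) = t_λ(⟦F⟧(w)) where t_λ(α) = 1 if α ∈ D_p^λ ∩ D_c^λ, t_λ(α) = #_p if α ∈ D_p^λ \ D_c^λ, t_λ(α) = #_c if α ∈ D_c^λ \ D_p^λ, and t_λ(α) = 0 if α ∉ D_p^λ ∪ D_c^λ. Then (V*, W*, ⟦·⟧*) together with the single pair D_p* = {1, #_p}, D_c* = {1, #_c} is a sound and complete mixed semantics for ⊢: Γ ⊢ Δ iff for every (λ, w) ∈ W*, ⟦Γ⟧*(λ, w) |≡_{{1,#_p},{1,#_c}} ⟦Δ⟧*(λ, w). -/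
import Mathlib


universe u v w x

/-- Mixed truth-relation. -/
def Mixed {V : Type*} (Dp Dc : Set V) (γ δ : Set V) : Prop :=
  γ ⊆ Dp → (δ ∩ Dc).Nonempty

def Monotonic {L : Type*} (Cons : Set L → Set L → Prop) : Prop :=
  ∀ ⦃Γ₁ Γ₂ Δ₁ Δ₂ : Set L⦄, Γ₁ ⊆ Γ₂ → Δ₁ ⊆ Δ₂ → Cons Γ₁ Δ₁ → Cons Γ₂ Δ₂

def ReflRel {L : Type*} (Cons : Set L → Set L → Prop) : Prop :=
  ∀ F : L, Cons {F} {F}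

def TransRel {L : Type*} (Cons : Set L → Set L → Prop) : Prop :=
  ∀ Γ Δ : Set L, ¬ Cons Γ Δ →
    ∃ Γ' Δ' : Set L, Γ ⊆ Γ' ∧ Δ ⊆ Δ' ∧ ¬ Cons Γ' Δ' ∧ Γ' ∪ Δ' = Set.univ

def LRPermeable {L : Type*} (Cons : Set L → Set L → Prop) : Prop :=
  ∀ Γ Δ S : Set L, Cons (Γ ∪ S) Δ → Cons Γ (S ∪ Δ)

def RLPermeable {L : Type*} (Cons : Set L → Set L → Prop) : Prop :=
  ∀ Γ Δ S : Set L, Cons Γ (S ∪ Δ) → Cons (Γ ∪ S) Δ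

def Permeable {L : Type*} (Cons : Set L → Set L → Prop) : Prop :=
  LRPermeable Cons ∨ RLPermeable Cons

def CompactRel {L : Type*} (Cons : Set L → Set L → Prop) : Prop :=
  ∀ Γ Δ : Set L, Cons Γ Δ →
    ∃ Γ' Δ' : Set L, Γ' ⊆ Γ ∧ Δ' ⊆ Δ ∧ Γ'.Finite ∧ Δ'.Finite ∧ Cons Γ' Δ'

/-- Sound and complete intersective mixed semantics. -/
def IsIMS {L V W Λ : Type*} (Cons : Set L → Set L → Prop)
    (interp : L → W → V) (Dp Dc : Λ → Set V) : Prop :=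
  ∀ Γ Δ : Set L, Cons Γ Δ ↔
    ∀ (w : W) (l : Λ), Mixed (Dp l) (Dc l)
      ((fun F => interp F w) '' Γ) ((fun F => interp F w) '' Δ)

/-- Sound and complete mixed semantics (single pair). -/
def IsMixedSem {L V W : Type*} (Cons : Set L → Set L → Prop)
    (interp : L → W → V) (Dp Dc : Set V) : Prop :=
  ∀ Γ Δ : Set L, Cons Γ Δ ↔
    ∀ w : W, Mixed Dp Dc ((fun F => interp F w) '' Γ) ((fun F => interp F w) '' Δ)

/-- Formulae of a sentential language. -/
inductive Formula (A : Type u) (C : Type u) (ar : C → ℕ) : Type u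
  | atom : A → Formula A C ar
  | conn : (c : C) → (Fin (ar c) → Formula A C ar) → Formula A C ar

/-- Substitution induced by a map from atoms to formulae. -/
def Formula.subst {A C : Type u} {ar : C → ℕ} (σ : A → Formula A C ar) :
    Formula A C ar → Formula A C ar
  | .atom a => σ a
  | .conn c Fs => .conn c (fun i => (Fs i).subst σ)

def SubstInvariant {A C : Type u} {ar : C → ℕ}
    (Cons : Set (Formula A C ar) → Set (Formula A C ar) → Prop) : Prop :=
  ∀ (σ : A → Formula A C ar) (Γ Δ : Set (Formula A C ar)),
    Cons Γ Δ → Cons (Formula.subst σ '' Γ) (Formula.subst σ '' Δ)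

/-- Evaluation of formulae from truth-functions and a valuation. -/
def evalF {A C : Type u} {ar : C → ℕ} {V : Type v}
    (tf : (c : C) → (Fin (ar c) → V) → V) (v : A → V) : Formula A C ar → V
  | .atom a => v a
  | .conn c Fs => tf c (fun i => evalF tf v (Fs i))

/-- Truth-functionality of an interpretation w.r.t. truth-functions. -/
def Compositional {A C : Type u} {ar : C → ℕ} {V : Type v} {W : Type w}
    (interp : Formula A C ar → W → V)
    (tf : (c : C) → (Fin (ar c) → V) → V) : Prop :=
  ∀ (c : C) (Fs : Fin (ar c) → Formula A C ar) (w : W),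
    interp (Formula.conn c Fs) w = tf c (fun i => interp (Fs i) w)

/-- Regular connectives. -/
def RegularRel {A C : Type u} {ar : C → ℕ}
    (Cons : Set (Formula A C ar) → Set (Formula A C ar) → Prop) : Prop :=
  ∀ c : C, ∃ Bp Bc : Set (Set (Fin (ar c)) × Set (Fin (ar c))),
    ∀ (Γ Δ : Set (Formula A C ar)) (Fs : Fin (ar c) → Formula A C ar),
      (Cons (Γ ∪ {Formula.conn c Fs}) Δ ↔
        ∀ B ∈ Bp, Cons (Γ ∪ Fs '' B.1) (Fs '' B.2 ∪ Δ)) ∧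
      (Cons Γ ({Formula.conn c Fs} ∪ Δ) ↔
        ∀ B ∈ Bc, Cons (Γ ∪ Fs '' B.1) (Fs '' B.2 ∪ Δ))

/- The Scott-Suszko translation `t_λ`. In `Fin 4` we encode the four distinct
truth values as: `1` = 1, `#_p` = 2, `#_c` = 3, `0` = 0. -/
open Classical in
noncomputable def tred {V : Type v} {Λ : Type x} (Dp Dc : Λ → Set V)
    (l : Λ) (a : V) : Fin 4 :=
  if a ∈ Dp l then (if a ∈ Dc l then 1 else 2)
  else (if a ∈ Dc l then 3 else 0)

/-- the Scott-Suszko reduction of a sound and complete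
intersective mixed semantics, with worlds `Λ × W`, interpretation
`⟦F⟧*(λ,w) = t_λ(⟦F⟧(w))`, and the single pair `D_p* = {1, #_p}`,
`D_c* = {1, #_c}`, is a sound and complete mixed semantics. -/
theorem statement_10 {L : Type u} (Cons : Set L → Set L → Prop)
    {V : Type v} {W : Type w} {Λ : Type x}
    (interp : L → W → V) (Dp Dc : Λ → Set V)
    (h : IsIMS Cons interp Dp Dc) :
    IsMixedSem Cons
      (fun F (p : Λ × W) => tred Dp Dc p.1 (interp F p.2))
      ({1, 2} : Set (Fin 4)) ({1, 3} : Set (Fin 4)) := by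
  have hp : ∀ (l : Λ) (a : V), tred Dp Dc l a ∈ ({1, 2} : Set (Fin 4)) ↔ a ∈ Dp l := by
    intro l a
    unfold tred
    split <;> split <;> simp_all [Set.mem_insert_iff]
  have hc : ∀ (l : Λ) (a : V), tred Dp Dc l a ∈ ({1, 3} : Set (Fin 4)) ↔ a ∈ Dc l := by
    intro l a
    unfold tred
    split <;> split <;> simp_all [Set.mem_insert_iff]
  intro Γ Δ
  rw [h Γ Δ]
  constructor
  · rintro H ⟨l, w⟩ hsub
    obtain ⟨b, hbΔ, hbDc⟩ := H w l (by
      rintro a ⟨F, hF, rfl⟩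
      exact (hp l (interp F w)).mp (hsub ⟨F, hF, rfl⟩))
    obtain ⟨F, hF, rfl⟩ := hbΔ
    exact ⟨_, ⟨F, hF, rfl⟩, (hc l _).mpr hbDc⟩
  · rintro H w l hsub
    obtain ⟨b, hbΔ, hbDc⟩ := H (l, w) (by
      rintro a ⟨F, hF, rfl⟩
      exact (hp l (interp F w)).mpr (hsub ⟨F, hF, rfl⟩))
    obtain ⟨F, hF, rfl⟩ := hbΔ
    exact ⟨_, ⟨F, hF, rfl⟩, (hc l _).mp hbDc⟩
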